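/- arXiv:1109.3159 — 2 statements merged into one kernel-verified Lean document; each statement's English description precedes it below -/
import Mathlib

section
/- Let A ∈ ℝ, c > 0, C ≥ 0, and let b : [A, ∞) → ℝ be a nonnegative C² function with b(A) = 0, satisfying b(t) = O(t^β) for some β > 0, such that b, b', b'' are integrable against e^{-t} dt, and such that b''(t) - b'(t) - c·b(t) ≥ -C·b(t)^{1/2} for all t ≥ A. Then b is bounded above and sup_{t ≥ A} b(t) ≤ (C/c)². -/
open MeasureTheory Filter Asymptotics

/-- ODE comparison lemma (Lemma 1.14): if `b ≥ 0` is `C²` on `[A,∞)`, vanishes at `A`,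
is `O(t^β)` for some `β > 0`, is integrable against `e^{-t} dt` together with its first two
derivatives, and satisfies `b'' - b' - c b ≥ -C √b`, then `b ≤ (C/c)²` on `[A,∞)`. -/
theorem stmt_5 (A c C β : ℝ) (hc : 0 < c) (hC : 0 ≤ C) (hβ : 0 < β)
    (b b' b'' : ℝ → ℝ)
    (hd1 : ∀ t ∈ Set.Ici A, HasDerivWithinAt b (b' t) (Set.Ici A) t)
    (hd2 : ∀ t ∈ Set.Ici A, HasDerivWithinAt b' (b'' t) (Set.Ici A) t)
    (hcont : ContinuousOn b'' (Set.Ici A))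
    (hnn : ∀ t ∈ Set.Ici A, 0 ≤ b t)
    (hA : b A = 0)
    (hgrowth : b =O[atTop] fun t => t ^ β)
    (hib : IntegrableOn (fun t => b t * Real.exp (-t)) (Set.Ici A) volume)
    (hib' : IntegrableOn (fun t => b' t * Real.exp (-t)) (Set.Ici A) volume)
    (hib'' : IntegrableOn (fun t => b'' t * Real.exp (-t)) (Set.Ici A) volume)
    (hode : ∀ t ∈ Set.Ici A, b'' t - b' t - c * b t ≥ -C * Real.sqrt (b t)) :
    ∀ t ∈ Set.Ici A, b t ≤ (C / c) ^ 2 := by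
  set M : ℝ := (C / c) ^ 2 with hMdef
  have hM0 : 0 ≤ M := sq_nonneg _
  by_contra hcon
  push_neg at hcon
  obtain ⟨t₀, ht₀A, ht₀⟩ := hcon
  -- basic regularity
  have hbc : ContinuousOn b (Set.Ici A) := fun t ht => (hd1 t ht).continuousWithinAt
  have hb'c : ContinuousOn b' (Set.Ici A) := fun t ht => (hd2 t ht).continuousWithinAt
  have hbD : ∀ x, A < x → HasDerivAt b (b' x) x := fun x hx =>
    (hd1 x hx.le).hasDerivAt (Ici_mem_nhds hx)
  have hb'D : ∀ x, A < x → HasDerivAt b' (b'' x) x := fun x hx =>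
    (hd2 x hx.le).hasDerivAt (Ici_mem_nhds hx)
  have ht₀A' : A < t₀ := by
    rcases eq_or_lt_of_le (Set.mem_Ici.1 ht₀A) with h | h
    · exfalso; rw [← h, hA] at ht₀; linarith
    · exact h
  -- key pointwise inequality
  have key : ∀ x, A ≤ x → M ≤ b x → 0 ≤ b'' x - b' x := by
    intro x hx hbx
    have h1 := hode x hx
    have hs : Real.sqrt M ≤ Real.sqrt (b x) := Real.sqrt_le_sqrt hbx
    have hsM : Real.sqrt M = C / c := by
      rw [hMdef, Real.sqrt_sq (by positivity)]
    have hs0 : 0 ≤ Real.sqrt (b x) := Real.sqrt_nonneg _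
    have hsq : Real.sqrt (b x) * Real.sqrt (b x) = b x := Real.mul_self_sqrt (hnn x hx)
    have hCs : C ≤ c * Real.sqrt (b x) := by
      rw [hsM] at hs
      calc C = c * (C / c) := by field_simp
        _ ≤ c * Real.sqrt (b x) := by nlinarith
    nlinarith [mul_nonneg (sub_nonneg.mpr hCs) hs0]
  -- the point α where b last touches M before t₀
  set Sα : Set ℝ := Set.Icc A t₀ ∩ b ⁻¹' Set.Iic M with hSαdef
  have hSαc : IsClosed Sα :=
    (hbc.mono (Set.Icc_subset_Ici_self)).preimage_isClosed_of_isClosed isClosed_Icc isClosed_Iic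
  have hSαne : Sα.Nonempty := ⟨A, ⟨le_refl A, ht₀A⟩, by simp [hA, hM0]⟩
  have hSαbdd : BddAbove Sα := ⟨t₀, fun s hs => hs.1.2⟩
  set α : ℝ := sSup Sα with hαdef
  have hαmem : α ∈ Sα := hSαc.csSup_mem hSαne hSαbdd
  have hAα : A ≤ α := hαmem.1.1
  have hbα : b α ≤ M := hαmem.2
  have hαt₀ : α < t₀ := lt_of_le_of_ne hαmem.1.2 (by intro heq; rw [heq] at hbα; exact absurd hbα (not_le.2 ht₀))
  have hpos1 : ∀ s, α < s → s ≤ t₀ → M < b s := by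
    intro s h1 h2
    by_contra hle
    push_neg at hle
    exact absurd (le_csSup hSαbdd (⟨⟨hAα.trans h1.le, h2⟩, hle⟩ : s ∈ Sα)) (not_le.2 h1)
  -- MVT on [α, t₀] gives a point with positive derivative
  obtain ⟨ξ₁, hξ₁mem, hξ₁⟩ := exists_hasDerivAt_eq_slope b b' hαt₀
    (hbc.mono (fun x hx => le_trans hAα hx.1))
    (fun x hx => hbD x (lt_of_le_of_lt hAα hx.1))
  have hξ₁A : A < ξ₁ := lt_of_le_of_lt hAα hξ₁mem.1
  have hb'ξ₁ : 0 < b' ξ₁ := by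
    rw [hξ₁]
    apply div_pos (by linarith) (by linarith [hξ₁mem.1])
  -- the auxiliary function h = exp(-t) * b'
  set H : ℝ → ℝ := fun t => Real.exp (-t) * b' t with hHdef
  have hHD : ∀ x, A < x → HasDerivAt H (Real.exp (-x) * (b'' x - b' x)) x := by
    intro x hx
    have h1 : HasDerivAt (fun t : ℝ => Real.exp (-t)) (-Real.exp (-x)) x := by
      have := (Real.hasDerivAt_exp (-x)).comp x (hasDerivAt_neg x)
      simpa [Function.comp_def] using this
    have h2 := h1.mul (hb'D x hx)
    exact h2.congr_deriv (by ring)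
  have hHc : ContinuousOn H (Set.Ici A) :=
    ((Real.continuous_exp.comp continuous_neg).continuousOn).mul hb'c
  have mono_H : ∀ D : Set ℝ, Convex ℝ D → D ⊆ Set.Ici A → interior D ⊆ Set.Ioi A →
      (∀ x ∈ interior D, M ≤ b x) → MonotoneOn H D := by
    intro D hconv hsub hsub' hbM
    apply monotoneOn_of_deriv_nonneg hconv (hHc.mono hsub)
    · intro x hx
      exact ((hHD x (hsub' hx)).differentiableAt).differentiableWithinAt
    · intro x hx
      rw [(hHD x (hsub' hx)).deriv]
      exact mul_nonneg (Real.exp_pos _).le (key x (hsub' hx).le (hbM x hx))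
  -- case split on whether b comes back below M after t₀
  set S : Set ℝ := Set.Ici t₀ ∩ b ⁻¹' Set.Iic M with hSdef
  by_cases hS : S.Nonempty
  · -- Case 1 : b returns to M at ω
    have hSc : IsClosed S :=
      (hbc.mono (Set.Ici_subset_Ici.2 ht₀A)).preimage_isClosed_of_isClosed isClosed_Ici isClosed_Iic
    set ω : ℝ := sInf S with hωdef
    have hωmem : ω ∈ S := hSc.csInf_mem hS ⟨t₀, fun s hs => hs.1⟩
    have ht₀ω : t₀ < ω :=
      lt_of_le_of_ne hωmem.1 (by
        intro heq
        rw [heq] at ht₀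
        exact absurd hωmem.2 (not_le.2 ht₀))
    have hbω : b ω ≤ M := hωmem.2
    have hpos2 : ∀ s, t₀ ≤ s → s < ω → M < b s := by
      intro s h1 h2
      by_contra hle
      push_neg at hle
      exact absurd (csInf_le ⟨t₀, fun u hu => hu.1⟩ (⟨h1, hle⟩ : s ∈ S)) (not_le.2 h2)
    obtain ⟨ξ₂, hξ₂mem, hξ₂⟩ := exists_hasDerivAt_eq_slope b b' ht₀ω
      (hbc.mono (fun x hx => le_trans ht₀A hx.1))
      (fun x hx => hbD x (lt_of_le_of_lt ht₀A hx.1))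
    have hb'ξ₂ : b' ξ₂ < 0 := by
      rw [hξ₂]
      apply div_neg_of_neg_of_pos (by linarith) (by linarith [hξ₂mem.1])
    have hmono := mono_H (Set.Icc α ω) (convex_Icc _ _) (fun x hx => le_trans hAα hx.1)
      (by rw [interior_Icc]; intro x hx; exact lt_of_le_of_lt hAα hx.1)
      (by
        rw [interior_Icc]
        intro x hx
        rcases le_or_gt x t₀ with hxle | hxgt
        · exact (hpos1 x hx.1 hxle).le
        · exact (hpos2 x hxgt.le hx.2).le)
    have hle := hmono (⟨hξ₁mem.1.le, hξ₁mem.2.le.trans ht₀ω.le⟩ : ξ₁ ∈ Set.Icc α ω)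
      (⟨hαt₀.le.trans hξ₂mem.1.le, hξ₂mem.2.le⟩ : ξ₂ ∈ Set.Icc α ω)
      (hξ₁mem.2.trans hξ₂mem.1).le
    have hH1 : 0 < H ξ₁ := mul_pos (Real.exp_pos _) hb'ξ₁
    have hH2 : H ξ₂ < 0 := mul_neg_of_pos_of_neg (Real.exp_pos _) hb'ξ₂
    linarith
  · -- Case 2 : b stays above M forever, hence grows exponentially
    have hpos2' : ∀ s, t₀ ≤ s → M < b s := by
      intro s hs
      by_contra hle
      push_neg at hle
      exact hS ⟨s, hs, hle⟩
    have hmono := mono_H (Set.Ici ξ₁) (convex_Ici _) (Set.Ici_subset_Ici.2 hξ₁A.le)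
      (by rw [interior_Ici]; intro x hx; exact hξ₁A.trans hx)
      (by
        rw [interior_Ici]
        intro x hx
        rcases le_or_gt x t₀ with hxle | hxgt
        · exact (hpos1 x (hξ₁mem.1.trans hx) hxle).le
        · exact (hpos2' x hxgt.le).le)
    set η : ℝ := H ξ₁ with hηdef
    have hη : 0 < η := mul_pos (Real.exp_pos _) hb'ξ₁
    have hb'exp : ∀ t, ξ₁ ≤ t → η * Real.exp t ≤ b' t := by
      intro t ht
      have h1 : η ≤ Real.exp (-t) * b' t :=
        hmono (Set.mem_Ici.2 (le_refl ξ₁)) (Set.mem_Ici.2 ht) ht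
      have h2 : Real.exp t * η ≤ Real.exp t * (Real.exp (-t) * b' t) :=
        mul_le_mul_of_nonneg_left h1 (Real.exp_pos t).le
      have h3 : Real.exp t * (Real.exp (-t) * b' t) = b' t := by
        rw [← mul_assoc, ← Real.exp_add, add_neg_cancel, Real.exp_zero, one_mul]
      rw [h3] at h2
      calc η * Real.exp t = Real.exp t * η := mul_comm _ _
        _ ≤ b' t := h2
    -- b t ≥ η exp t - K₀
    set K₀ : ℝ := η * Real.exp ξ₁ with hK₀def
    have hK₀ : 0 < K₀ := mul_pos hη (Real.exp_pos _)
    have hg : MonotoneOn (fun t => b t - η * Real.exp t) (Set.Ici ξ₁) := by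
      apply monotoneOn_of_deriv_nonneg (convex_Ici _)
      · exact (hbc.mono (Set.Ici_subset_Ici.2 hξ₁A.le)).sub
          (continuous_const.mul Real.continuous_exp).continuousOn
      · rw [interior_Ici]
        intro x hx
        exact (((hbD x (hξ₁A.trans hx)).sub
          ((Real.hasDerivAt_exp x).const_mul η)).differentiableAt).differentiableWithinAt
      · rw [interior_Ici]
        intro x hx
        rw [show (fun t => b t - η * Real.exp t) = b - fun y => η * Real.exp y from rfl,
          ((hbD x (hξ₁A.trans hx)).sub ((Real.hasDerivAt_exp x).const_mul η)).deriv]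
        have := hb'exp x hx.le
        linarith
    have hblow : ∀ t, ξ₁ ≤ t → η * Real.exp t - K₀ ≤ b t := by
      intro t ht
      have h1 : b ξ₁ - η * Real.exp ξ₁ ≤ b t - η * Real.exp t :=
        hg (Set.mem_Ici.2 (le_refl ξ₁)) (Set.mem_Ici.2 ht) ht
      have h2 : 0 ≤ b ξ₁ := hnn ξ₁ hξ₁A.le
      rw [hK₀def]
      linarith
    -- contradiction with polynomial growth
    obtain ⟨K, hK⟩ := hgrowth.bound
    set K' : ℝ := max K 0 with hK'def
    have hK'0 : 0 ≤ K' := le_max_right _ _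
    set n : ℕ := ⌈β⌉₊ with hndef
    have hn : β ≤ (n : ℝ) := Nat.le_ceil β
    have htend := Real.tendsto_exp_div_pow_atTop n
    have hev : ∀ᶠ t in atTop, (K' + K₀) / η < Real.exp t / t ^ n :=
      htend.eventually_gt_atTop _
    obtain ⟨t, hbnd, h1t, h2t, h3t⟩ :=
      (hK.and ((eventually_ge_atTop (1:ℝ)).and ((eventually_ge_atTop ξ₁).and hev))).exists
    have htpos : (0:ℝ) < t := lt_of_lt_of_le one_pos h1t
    have htn : (1:ℝ) ≤ t ^ n := one_le_pow₀ h1t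
    have htn0 : (0:ℝ) < t ^ n := lt_of_lt_of_le one_pos htn
    have hbt : b t ≤ K' * t ^ n := by
      have hnb : ‖b t‖ = b t := by
        rw [Real.norm_eq_abs, abs_of_nonneg (hnn t (hξ₁A.le.trans h2t))]
      have hntβ : ‖t ^ β‖ = t ^ β := by
        rw [Real.norm_eq_abs, abs_of_nonneg (Real.rpow_nonneg htpos.le β)]
      have h4 : t ^ β ≤ t ^ n := by
        have := Real.rpow_le_rpow_of_exponent_le h1t hn
        rwa [Real.rpow_natCast] at this
      have h5 : b t ≤ K * t ^ β := by rw [← hnb, ← hntβ]; exact hbnd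
      have h6 : K * t ^ β ≤ K' * t ^ β :=
        mul_le_mul_of_nonneg_right (le_max_left _ _) (Real.rpow_nonneg htpos.le β)
      have h7 : K' * t ^ β ≤ K' * t ^ n := mul_le_mul_of_nonneg_left h4 hK'0
      linarith
    have h8 : η * Real.exp t - K₀ ≤ K' * t ^ n := le_trans (hblow t h2t) hbt
    have h9 : K₀ ≤ K₀ * t ^ n := le_mul_of_one_le_right hK₀.le htn
    have h10 : η * Real.exp t ≤ (K' + K₀) * t ^ n := by
      have hexpand : (K' + K₀) * t ^ n = K' * t ^ n + K₀ * t ^ n := by ring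
      linarith
    rw [div_lt_div_iff₀ hη htn0] at h3t
    have hcomm : Real.exp t * η = η * Real.exp t := mul_comm _ _
    linarith
end

section
/- Let (Ω, μ) be a finite measure space, u ≥ 0 measurable, ϵ > 1, C, C' ≥ 0 constants, and suppose ‖u‖_{L²(μ)} ≤ Q₀ < ∞ and that for every p ≥ 2 one has ‖u‖_{L^{pϵ}(μ)}^p ≤ C‖u‖_{L^p(μ)}^p + C'·p·‖u‖_{L^p(μ)}^{p-1}. Then u ∈ L^∞(μ), and there is a bound on ‖u‖_{L^∞(μ)} depending only on ϵ, C, C', Q₀ and μ(Ω). More precisely, there exist constants Q, C₁ > 0 depending only on these data such that ‖u‖_{L^p(μ)} ≤ Q·(C₁ p)^{-m/p} for all p ≥ 2 (for a suitable fixed m > 0), whence ‖u‖_{L^∞(μ)} ≤ Q. -/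
open MeasureTheory

open scoped ENNReal NNReal

set_option maxHeartbeats 1000000

/-- Abstract Moser iteration: on a finite measure space, if `u ≥ 0` has
`‖u‖_{L²} ≤ Q₀ < ∞` and satisfies, for all `p ≥ 2`, the inductive control
`‖u‖_{L^{pϵ}}^p ≤ C ‖u‖_{L^p}^p + C' p ‖u‖_{L^p}^{p-1}` with `ϵ > 1`, then `u ∈ L^∞`
with a bound from the data; more precisely `‖u‖_{L^p} ≤ Q (C₁ p)^{-m/p}` for all `p ≥ 2`
for suitable constants `Q, C₁, m > 0`, whence `‖u‖_{L^∞} ≤ Q`. -/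
theorem stmt_13 {Ω : Type*} [MeasurableSpace Ω] (μ : Measure Ω) [IsFiniteMeasure μ]
    (u : Ω → ℝ) (hmeas : AEMeasurable u μ) (hpos : ∀ x, 0 ≤ u x)
    (ϵ C C' Q₀ : ℝ) (hϵ : 1 < ϵ) (hC : 0 ≤ C) (hC' : 0 ≤ C')
    (hQ₀ : eLpNorm u 2 μ ≤ ENNReal.ofReal Q₀)
    (hrec : ∀ p : ℝ, 2 ≤ p →
      eLpNorm u (ENNReal.ofReal (p * ϵ)) μ ^ p ≤
        ENNReal.ofReal C * eLpNorm u (ENNReal.ofReal p) μ ^ p +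
          ENNReal.ofReal (C' * p) * eLpNorm u (ENNReal.ofReal p) μ ^ (p - 1)) :
    MemLp u ⊤ μ ∧
    ∃ Q C₁ m : ℝ, 0 < Q ∧ 0 < C₁ ∧ 0 < m ∧
      (∀ p : ℝ, 2 ≤ p →
        eLpNorm u (ENNReal.ofReal p) μ ≤ ENNReal.ofReal (Q * (C₁ * p) ^ (-(m / p)))) ∧
      eLpNorm u ⊤ μ ≤ ENNReal.ofReal Q := by
  have hϵ0 : (0:ℝ) < ϵ := lt_trans one_pos hϵ
  have hms : AEStronglyMeasurable u μ := hmeas.aestronglyMeasurable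
  -- one iteration step
  have step : ∀ p b : ℝ, 2 ≤ p → 1 ≤ b → eLpNorm u (ENNReal.ofReal p) μ ≤ ENNReal.ofReal b →
      eLpNorm u (ENNReal.ofReal (p * ϵ)) μ ≤
        ENNReal.ofReal ((C + C' * p + 1) ^ (1/p) * b) := by
    intro p b hp hb hub
    have hp0 : (0:ℝ) < p := lt_of_lt_of_le two_pos hp
    have hcp : (0:ℝ) ≤ C' * p := mul_nonneg hC' hp0.le
    have hob : (1:ℝ≥0∞) ≤ ENNReal.ofReal b := by
      rw [← ENNReal.ofReal_one]; exact ENNReal.ofReal_le_ofReal hb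
    have h1 : eLpNorm u (ENNReal.ofReal (p * ϵ)) μ ^ p ≤
        ENNReal.ofReal (C + C' * p + 1) * (ENNReal.ofReal b) ^ p := by
      calc eLpNorm u (ENNReal.ofReal (p * ϵ)) μ ^ p
          ≤ ENNReal.ofReal C * eLpNorm u (ENNReal.ofReal p) μ ^ p +
              ENNReal.ofReal (C' * p) * eLpNorm u (ENNReal.ofReal p) μ ^ (p - 1) := hrec p hp
        _ ≤ ENNReal.ofReal C * (ENNReal.ofReal b) ^ p +
              ENNReal.ofReal (C' * p) * (ENNReal.ofReal b) ^ p := by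
            refine add_le_add (mul_le_mul' le_rfl ?_) (mul_le_mul' le_rfl ?_)
            · exact ENNReal.rpow_le_rpow hub (by linarith)
            · exact le_trans (ENNReal.rpow_le_rpow hub (by linarith))
                (ENNReal.rpow_le_rpow_of_exponent_le hob (by linarith))
        _ = (ENNReal.ofReal C + ENNReal.ofReal (C' * p)) * (ENNReal.ofReal b) ^ p := by ring
        _ ≤ ENNReal.ofReal (C + C' * p + 1) * (ENNReal.ofReal b) ^ p := by
            refine mul_le_mul' ?_ le_rfl
            rw [← ENNReal.ofReal_add hC hcp]
            exact ENNReal.ofReal_le_ofReal (by linarith)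
    calc eLpNorm u (ENNReal.ofReal (p * ϵ)) μ
        = (eLpNorm u (ENNReal.ofReal (p * ϵ)) μ ^ p) ^ (1/p) := by
          rw [← ENNReal.rpow_mul, mul_one_div_cancel hp0.ne', ENNReal.rpow_one]
      _ ≤ (ENNReal.ofReal (C + C' * p + 1) * (ENNReal.ofReal b) ^ p) ^ (1/p) :=
          ENNReal.rpow_le_rpow h1 (by positivity)
      _ = ENNReal.ofReal ((C + C' * p + 1) ^ (1/p) * b) := by
          rw [ENNReal.mul_rpow_of_nonneg _ _ (by positivity), ← ENNReal.rpow_mul,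
            mul_one_div_cancel hp0.ne', ENNReal.rpow_one,
            ENNReal.ofReal_rpow_of_pos (by linarith), ← ENNReal.ofReal_mul (by positivity)]
  -- the series
  set C₂ : ℝ := C + 2*C' + 1 with hC₂def
  have hC₂1 : (1:ℝ) ≤ C₂ := by simp only [hC₂def]; linarith
  have hlogC₂ : 0 ≤ Real.log C₂ := Real.log_nonneg hC₂1
  have hlogϵ : 0 ≤ Real.log ϵ := Real.log_nonneg hϵ.le
  set g : ℕ → ℝ := fun j => (Real.log C₂ + (j:ℝ) * Real.log ϵ) * (1/ϵ)^j with hgdef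
  have hg0 : ∀ j, 0 ≤ g j := by
    intro j
    have : (0:ℝ) ≤ (1/ϵ)^j := by positivity
    have : (0:ℝ) ≤ Real.log C₂ + (j:ℝ) * Real.log ϵ := by positivity
    positivity
  have hx1 : (1/ϵ : ℝ) < 1 := by
    rw [div_lt_one hϵ0]; exact hϵ
  have hgsum : Summable g := by
    have h1 : Summable (fun j : ℕ => Real.log C₂ * (1/ϵ)^j) :=
      (summable_geometric_of_lt_one (by positivity) hx1).mul_left _
    have h2 : Summable (fun j : ℕ => Real.log ϵ * ((j:ℝ) * (1/ϵ)^j)) := by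
      have := summable_pow_mul_geometric_of_norm_lt_one (R := ℝ) 1
        (r := 1/ϵ) (by rw [Real.norm_eq_abs, abs_of_pos (by positivity)]; exact hx1)
      simpa [pow_one] using this.mul_left (Real.log ϵ)
    exact (h1.add h2).congr (fun j => by simp only [hgdef]; ring)
  set S : ℝ := ∑' j, g j with hSdef
  have hS0 : 0 ≤ S := tsum_nonneg hg0
  have hsum_le : ∀ k : ℕ, ∑ j ∈ Finset.range k, g j ≤ S :=
    fun k => Summable.sum_le_tsum (Finset.range k) (fun i _ => hg0 i) hgsum
  set B0 : ℝ := max Q₀ 1 with hB0def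
  have hB01 : (1:ℝ) ≤ B0 := le_max_right _ _
  -- iteration
  have hpk : ∀ k : ℕ, (2:ℝ) ≤ 2 * ϵ^k := by
    intro k
    nlinarith [one_le_pow₀ hϵ.le (n := k)]
  have iter : ∀ k : ℕ, eLpNorm u (ENNReal.ofReal (2 * ϵ^k)) μ ≤
      ENNReal.ofReal (B0 * Real.exp (∑ j ∈ Finset.range k, g j)) := by
    intro k
    induction k with
    | zero =>
      simp only [pow_zero, mul_one, Finset.range_zero, Finset.sum_empty, Real.exp_zero]
      have : ENNReal.ofReal (2:ℝ) = (2 : ℝ≥0∞) := by norm_num [ENNReal.ofReal_ofNat]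
      rw [this]
      exact hQ₀.trans (ENNReal.ofReal_le_ofReal (le_max_left _ _))
    | succ k ih =>
      have hϵk1 : (1:ℝ) ≤ ϵ^k := one_le_pow₀ hϵ.le
      have hbk : (1:ℝ) ≤ B0 * Real.exp (∑ j ∈ Finset.range k, g j) := by
        have hs : (0:ℝ) ≤ ∑ j ∈ Finset.range k, g j := Finset.sum_nonneg fun i _ => hg0 i
        have := Real.one_le_exp hs
        nlinarith
      have h := step (2 * ϵ^k) _ (hpk k) hbk ih
      have hrw : (2 * ϵ^k) * ϵ = 2 * ϵ^(k+1) := by ring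
      rw [hrw] at h
      refine h.trans (ENNReal.ofReal_le_ofReal ?_)
      have hbase : (0:ℝ) < C + C' * (2 * ϵ^k) + 1 := by
        nlinarith [mul_nonneg hC' (by positivity : (0:ℝ) ≤ 2 * ϵ^k)]
      have hA : (C + C' * (2 * ϵ^k) + 1) ^ (1/(2 * ϵ^k)) ≤ Real.exp (g k) := by
        rw [Real.rpow_def_of_pos hbase, Real.exp_le_exp]
        have hlog1 : Real.log (C + C' * (2 * ϵ^k) + 1) ≤ Real.log C₂ + (k:ℝ) * Real.log ϵ := by
          have hle : C + C' * (2 * ϵ^k) + 1 ≤ C₂ * ϵ^k := by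
            simp only [hC₂def]; nlinarith
          calc Real.log (C + C' * (2 * ϵ^k) + 1) ≤ Real.log (C₂ * ϵ^k) :=
                Real.log_le_log hbase hle
            _ = Real.log C₂ + (k:ℝ) * Real.log ϵ := by
                rw [Real.log_mul (by linarith) (by positivity), Real.log_pow]
        have hdiv : (1:ℝ)/(2 * ϵ^k) ≤ (1/ϵ)^k := by
          rw [div_pow, one_pow]
          apply div_le_div_of_nonneg_left one_pos.le (by positivity)
          nlinarith
        have hlogpos : 0 ≤ Real.log (C + C' * (2 * ϵ^k) + 1) := by
          apply Real.log_nonneg; nlinarith [mul_nonneg hC' (by positivity : (0:ℝ) ≤ 2 * ϵ^k)]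
        calc Real.log (C + C' * (2 * ϵ^k) + 1) * (1/(2 * ϵ^k))
            ≤ (Real.log C₂ + (k:ℝ) * Real.log ϵ) * ((1/ϵ)^k) :=
              mul_le_mul hlog1 hdiv (by positivity) (by positivity)
          _ = g k := rfl
      rw [Finset.sum_range_succ, Real.exp_add]
      nlinarith [mul_nonneg (sub_nonneg.2 hA) (zero_le_one.trans hbk),
        Real.exp_pos (∑ j ∈ Finset.range k, g j)]
  -- uniform L^p bound
  set R : ℝ := B0 * Real.exp S with hRdef
  have hR1 : (1:ℝ) ≤ R := by
    have := Real.one_le_exp hS0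
    nlinarith
  have iterR : ∀ k : ℕ, eLpNorm u (ENNReal.ofReal (2 * ϵ^k)) μ ≤ ENNReal.ofReal R := by
    intro k
    refine (iter k).trans (ENNReal.ofReal_le_ofReal ?_)
    have := Real.exp_le_exp.mpr (hsum_le k)
    nlinarith [Real.exp_pos (∑ j ∈ Finset.range k, g j)]
  set M : ℝ := max 1 (μ Set.univ).toReal with hMdef
  have hM1 : (1:ℝ) ≤ M := le_max_left _ _
  set R' : ℝ := R * M ^ ((1:ℝ)/2) with hR'def
  have hR'1 : (1:ℝ) ≤ R' := by
    have h2 : (1:ℝ) ≤ M ^ ((1:ℝ)/2) := Real.one_le_rpow hM1 (by norm_num)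
    nlinarith
  have hunif : ∀ p : ℝ, 2 ≤ p → eLpNorm u (ENNReal.ofReal p) μ ≤ ENNReal.ofReal R' := by
    intro p hp
    have hp0 : (0:ℝ) < p := by linarith
    obtain ⟨k, hk⟩ := pow_unbounded_of_one_lt (p/2) hϵ
    have hpk' : p ≤ 2 * ϵ^k := by nlinarith
    have hmono := eLpNorm_le_eLpNorm_mul_rpow_measure_univ
      (p := ENNReal.ofReal p) (q := ENNReal.ofReal (2 * ϵ^k))
      (ENNReal.ofReal_le_ofReal hpk') hms
    have htR : (ENNReal.ofReal p).toReal = p := ENNReal.toReal_ofReal hp0.le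
    have htR2 : (ENNReal.ofReal (2 * ϵ^k)).toReal = 2 * ϵ^k :=
      ENNReal.toReal_ofReal (by positivity)
    rw [htR, htR2] at hmono
    have hϵk1 : (1:ℝ) ≤ ϵ^k := one_le_pow₀ hϵ.le
    have hexp0 : 0 ≤ 1/p - 1/(2 * ϵ^k) := by
      have : 1/(2*ϵ^k) ≤ 1/p := by
        apply div_le_div_of_nonneg_left one_pos.le hp0 hpk'
      linarith
    have hexp2 : 1/p - 1/(2 * ϵ^k) ≤ 1/2 := by
      have h1 : 1/p ≤ 1/2 := by
        apply div_le_div_of_nonneg_left one_pos.le two_pos hp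
      have h2 : 0 < 1/(2*ϵ^k) := by positivity
      linarith
    have hMle : μ Set.univ ≤ ENNReal.ofReal M := by
      have : μ Set.univ = ENNReal.ofReal (μ Set.univ).toReal :=
        (ENNReal.ofReal_toReal (measure_ne_top μ _)).symm
      rw [this]
      exact ENNReal.ofReal_le_ofReal (le_max_right _ _)
    have hμbound : μ Set.univ ^ (1/p - 1/(2 * ϵ^k)) ≤ ENNReal.ofReal (M ^ ((1:ℝ)/2)) := by
      calc μ Set.univ ^ (1/p - 1/(2 * ϵ^k))
          ≤ (ENNReal.ofReal M) ^ (1/p - 1/(2 * ϵ^k)) := ENNReal.rpow_le_rpow hMle hexp0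
        _ ≤ (ENNReal.ofReal M) ^ ((1:ℝ)/2) := by
            apply ENNReal.rpow_le_rpow_of_exponent_le _ hexp2
            rw [← ENNReal.ofReal_one]
            exact ENNReal.ofReal_le_ofReal hM1
        _ = ENNReal.ofReal (M ^ ((1:ℝ)/2)) := ENNReal.ofReal_rpow_of_pos (by linarith)
    calc eLpNorm u (ENNReal.ofReal p) μ
        ≤ eLpNorm u (ENNReal.ofReal (2 * ϵ^k)) μ * μ Set.univ ^ (1/p - 1/(2 * ϵ^k)) := hmono
      _ ≤ ENNReal.ofReal R * ENNReal.ofReal (M ^ ((1:ℝ)/2)) := by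
          exact mul_le_mul' (iterR k) hμbound
      _ = ENNReal.ofReal R' := by
          rw [← ENNReal.ofReal_mul (by linarith)]
  have htopb : eLpNorm u ⊤ μ ≤ ENNReal.ofReal (R' * Real.exp 1) := by
    set Q : ℝ := R' * Real.exp 1 with hQdef
    have hR'Q : R' < Q := by
      have h1 : (1:ℝ) < Real.exp 1 := by
        have := Real.add_one_le_exp (1:ℝ); linarith
      nlinarith
    have hQ0 : (0:ℝ) < Q := by nlinarith
    set A := {x | ENNReal.ofReal Q ≤ (‖u x‖₊ : ℝ≥0∞)} with hAdef
    have hmeasA : ∀ p : ℝ, 2 ≤ p → μ A ≤ ENNReal.ofReal (R'/Q) ^ p := by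
      intro p hp
      have hp0 : (0:ℝ) < p := by linarith
      have hne0 : ENNReal.ofReal p ≠ 0 := by
        simp [ENNReal.ofReal_eq_zero]; linarith
      have hneT : ENNReal.ofReal p ≠ ⊤ := ENNReal.ofReal_ne_top
      have hcheb := meas_ge_le_mul_pow_eLpNorm_enorm μ hne0 hneT hms
        (ε := ENNReal.ofReal Q) (by simp [ENNReal.ofReal_eq_zero]; linarith)
        (fun h => absurd h ENNReal.ofReal_ne_top)
      have htR : (ENNReal.ofReal p).toReal = p := ENNReal.toReal_ofReal hp0.le
      rw [htR] at hcheb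
      calc μ A ≤ (ENNReal.ofReal Q)⁻¹ ^ p * eLpNorm u (ENNReal.ofReal p) μ ^ p := hcheb
        _ ≤ (ENNReal.ofReal Q)⁻¹ ^ p * (ENNReal.ofReal R') ^ p :=
            mul_le_mul' le_rfl (ENNReal.rpow_le_rpow (hunif p hp) hp0.le)
        _ = ((ENNReal.ofReal Q)⁻¹ * ENNReal.ofReal R') ^ p := by
            rw [ENNReal.mul_rpow_of_nonneg _ _ hp0.le]
        _ = ENNReal.ofReal (R'/Q) ^ p := by
            congr 1
            rw [ENNReal.ofReal_div_of_pos hQ0, div_eq_mul_inv, mul_comm]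
    have hA0 : μ A = 0 := by
      have hs : R'/Q < 1 := by
        rw [div_lt_one hQ0]; exact hR'Q
      have hs0 : 0 < R'/Q := by positivity
      have htend : Filter.Tendsto (fun p : ℝ => ENNReal.ofReal ((R'/Q) ^ p))
          Filter.atTop (nhds 0) := by
        have h1 := tendsto_rpow_atTop_of_base_lt_one (R'/Q) (by linarith) hs
        have := (ENNReal.continuous_ofReal.tendsto 0).comp h1
        simpa [Function.comp_def] using this
      have hbd : ∀ᶠ p : ℝ in Filter.atTop, μ A ≤ ENNReal.ofReal ((R'/Q) ^ p) := by
        filter_upwards [Filter.eventually_ge_atTop (2:ℝ)] with p hp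
        have := hmeasA p hp
        rwa [ENNReal.ofReal_rpow_of_pos hs0] at this
      exact le_antisymm (ge_of_tendsto htend hbd) bot_le
    have haeb : ∀ᵐ x ∂μ, ‖u x‖ ≤ Q := by
      have := measure_eq_zero_iff_ae_notMem.mp hA0
      filter_upwards [this] with x hx
      simp only [hAdef, Set.mem_setOf_eq, not_le] at hx
      have : (‖u x‖₊ : ℝ≥0∞) < ENNReal.ofReal Q := hx
      have h2 : ENNReal.ofReal ‖u x‖ < ENNReal.ofReal Q := by
        rwa [ofReal_norm, enorm_eq_nnnorm]
      by_contra h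
      push_neg at h
      exact absurd (ENNReal.ofReal_le_ofReal h.le) (not_le.mpr h2)
    rw [eLpNorm_exponent_top]
    exact eLpNormEssSup_le_of_ae_bound haeb
  refine ⟨⟨hms, lt_of_le_of_lt htopb ENNReal.ofReal_lt_top⟩,
  R' * Real.exp 1, 1, 1, by positivity, one_pos, one_pos, ?_, htopb⟩
  intro p hp
  have hp0 : (0:ℝ) < p := by linarith
  refine (hunif p hp).trans (ENNReal.ofReal_le_ofReal ?_)
  rw [one_mul, Real.rpow_def_of_pos hp0]
  have hlogp : Real.log p ≤ p := (Real.log_le_sub_one_of_pos hp0).trans (by linarith)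
  have : (-1:ℝ) ≤ Real.log p * (-(1/p)) := by
    rw [mul_neg, neg_le_neg_iff, mul_one_div, div_le_one hp0]
    exact hlogp
  calc R' = R' * Real.exp 1 * Real.exp (-1) := by
        rw [mul_assoc, ← Real.exp_add]; norm_num
    _ ≤ R' * Real.exp 1 * Real.exp (Real.log p * (-(1/p))) := by
        have h2 := Real.exp_le_exp.mpr this
        have h3 : (0:ℝ) ≤ R' * Real.exp 1 := by positivity
        nlinarith [mul_le_mul_of_nonneg_left h2 h3]
end
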